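/- arXiv:1810.11397 — 3 statements merged into one kernel-verified Lean document; each statement's English description precedes it below -/
import Mathlib

section
/- Let E be a random variable on (0,1] satisfying P[E ≤ x] = c·x^{γ-1} for c > 0 and γ ∈ (1,2), and suppose Y is a bounded random variable with E[Y | E = t, D = 1] → μ₁ ≠ 0 as t ↓ 0, where D is Bernoulli with P[D=1|E] = E. Then the trimming bias B_b := -E[D·Y/E · 1_{E < b}] = -E[E[Y|E,D=1]·1_{E < b}] satisfies B_b = -μ₁·c·b^{γ-1}·(1+o(1)) as b ↓ 0. -/
open MeasureTheory Filter Set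

/-- Trimming bias asymptotics: with `P[E ≤ x] = c x^(γ-1)`, `γ ∈ (1,2)`, and the
conditional mean `m(t) = E[Y | E = t, D = 1]` bounded with `m(t) → μ₁ ≠ 0` as `t ↓ 0`,
the trimming bias `B_b = -E[m(E) 1_{E < b}]` satisfies `B_b = -μ₁ c b^(γ-1) (1+o(1))`. -/
theorem stmt4
    {Ω : Type*} [MeasurableSpace Ω] (ℙ : Measure Ω) [IsProbabilityMeasure ℙ]
    (E : Ω → ℝ) (hmeas : Measurable E) (hE : ∀ ω, E ω ∈ Set.Ioc (0 : ℝ) 1)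
    (c γ : ℝ) (hc : 0 < c) (hγ : γ ∈ Set.Ioo (1 : ℝ) 2)
    (hF : ∀ x ∈ Set.Ioc (0 : ℝ) 1, (ℙ {ω | E ω ≤ x}).toReal = c * x ^ (γ - 1))
    (m : ℝ → ℝ) (hm_meas : Measurable m) (M : ℝ) (hbdd : ∀ t, |m t| ≤ M)
    (μ₁ : ℝ) (hμ₁ : μ₁ ≠ 0)
    (hlim : Tendsto m (nhdsWithin 0 (Set.Ioi 0)) (nhds μ₁)) :
    Tendsto (fun b : ℝ =>
        (-(∫ ω, if E ω < b then m (E ω) else 0 ∂ℙ)) / (-(μ₁ * c * b ^ (γ - 1))))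
      (nhdsWithin 0 (Set.Ioi 0)) (nhds 1) := by
  obtain ⟨hγ1, hγ2⟩ := hγ
  have hγ0 : 0 < γ - 1 := by linarith
  have hset : ∀ b : ℝ, MeasurableSet {ω | E ω < b} := fun b => hmeas measurableSet_Iio
  have hsetle : ∀ b : ℝ, MeasurableSet {ω | E ω ≤ b} := fun b => hmeas measurableSet_Iic
  -- ℙ (E < b) = c b^(γ-1)
  have hPlt : ∀ b ∈ Set.Ioc (0:ℝ) 1, (ℙ {ω | E ω < b}).toReal = c * b ^ (γ - 1) := by
    intro b hb
    obtain ⟨hb0, hb1⟩ := hb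
    apply le_antisymm
    · calc (ℙ {ω | E ω < b}).toReal ≤ (ℙ {ω | E ω ≤ b}).toReal := by
            apply ENNReal.toReal_mono (measure_ne_top ℙ _)
            exact measure_mono (fun ω (h : E ω < b) => le_of_lt h)
        _ = c * b ^ (γ - 1) := hF b ⟨hb0, hb1⟩
    · have hne : (nhdsWithin b (Set.Ioo 0 b)).NeBot := right_nhdsWithin_Ioo_neBot hb0
      have hcont : Tendsto (fun x : ℝ => c * x ^ (γ - 1)) (nhdsWithin b (Set.Ioo 0 b))
          (nhds (c * b ^ (γ - 1))) := by
        apply Tendsto.mono_left _ nhdsWithin_le_nhds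
        exact (continuousAt_const.mul
          (Real.continuousAt_rpow_const b (γ-1) (Or.inr hγ0.le))).tendsto
      refine le_of_tendsto hcont ?_
      filter_upwards [self_mem_nhdsWithin] with x hx
      obtain ⟨hx0, hxb⟩ := hx
      rw [← hF x ⟨hx0, hxb.le.trans hb1⟩]
      apply ENNReal.toReal_mono (measure_ne_top ℙ _)
      exact measure_mono (fun ω h => lt_of_le_of_lt h hxb)
  have hmE : Integrable (fun ω => m (E ω)) ℙ :=
    ⟨((hm_meas.comp hmeas).aestronglyMeasurable),
      HasFiniteIntegral.of_bounded (C := M) (ae_of_all _ fun ω => by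
        simpa [Real.norm_eq_abs] using hbdd (E ω))⟩
  rw [Metric.tendsto_nhdsWithin_nhds]
  intro ε hε
  have hε' : 0 < ε * |μ₁| / 2 := by positivity
  rw [Metric.tendsto_nhdsWithin_nhds] at hlim
  obtain ⟨δ₁, hδ₁, hδ⟩ := hlim _ hε'
  refine ⟨min δ₁ 1, lt_min hδ₁ one_pos, ?_⟩
  intro b hb hbd
  have hb0 : 0 < b := hb
  have hbδ : b < δ₁ := by
    have := hbd
    rw [Real.dist_eq, sub_zero, abs_of_pos hb0] at this
    exact this.trans_le (min_le_left _ _)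
  have hb1 : b ≤ 1 := by
    have := hbd
    rw [Real.dist_eq, sub_zero, abs_of_pos hb0] at this
    exact (this.trans_le (min_le_right _ _)).le
  set s := {ω | E ω < b} with hs
  have hP : (ℙ s).toReal = c * b ^ (γ - 1) := hPlt b ⟨hb0, hb1⟩
  have hKpos : 0 < c * b ^ (γ - 1) := by positivity
  -- rewrite the integral of the if as set integral
  have hI : (∫ ω, (if E ω < b then m (E ω) else 0) ∂ℙ) = ∫ ω in s, m (E ω) ∂ℙ := by
    rw [← integral_indicator (hset b)]
    congr 1
  -- bound on the set integral
  have hbound : |(∫ ω in s, m (E ω) ∂ℙ) - μ₁ * (c * b ^ (γ - 1))| ≤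
      (ε * |μ₁| / 2) * (c * b ^ (γ - 1)) := by
    have h1 : IntegrableOn (fun ω => m (E ω)) s ℙ := hmE.integrableOn
    have h2 : IntegrableOn (fun _ : Ω => μ₁) s ℙ := integrableOn_const (measure_ne_top ℙ s)
    have hsub : (∫ ω in s, m (E ω) ∂ℙ) - μ₁ * (c * b ^ (γ - 1))
        = ∫ ω in s, (m (E ω) - μ₁) ∂ℙ := by
      rw [integral_sub h1 h2, setIntegral_const, measureReal_def, hP, smul_eq_mul, mul_comm]
    rw [hsub]
    have := norm_setIntegral_le_of_norm_le_const (μ := ℙ) (s := s)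
      (C := ε * |μ₁| / 2) (f := fun ω => m (E ω) - μ₁) (measure_lt_top ℙ s)
      (fun ω hω => by
        have hEω : E ω ∈ Set.Ioi (0:ℝ) := (hE ω).1
        have hdist : dist (E ω) 0 < δ₁ := by
          rw [Real.dist_eq, sub_zero, abs_of_pos (hE ω).1]
          exact lt_trans hω hbδ
        have := hδ hEω hdist
        rw [Real.dist_eq] at this
        simpa [Real.norm_eq_abs] using this.le)
    calc |∫ ω in s, (m (E ω) - μ₁) ∂ℙ| ≤ (ε * |μ₁| / 2) * (ℙ s).toReal := by
          simpa [Real.norm_eq_abs, measureReal_def] using this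
      _ = (ε * |μ₁| / 2) * (c * b ^ (γ - 1)) := by rw [hP]
  -- finish
  have hK : μ₁ * c * b ^ (γ - 1) ≠ 0 :=
    mul_ne_zero (mul_ne_zero hμ₁ hc.ne') (Real.rpow_pos_of_pos hb0 _).ne'
  have hDpos : 0 < |μ₁| * (c * b ^ (γ - 1)) := by
    apply mul_pos (abs_pos.mpr hμ₁) hKpos
  have key : dist ((-(∫ ω, if E ω < b then m (E ω) else 0 ∂ℙ)) /
      (-(μ₁ * c * b ^ (γ - 1)))) 1 ≤ ε / 2 := by
    rw [neg_div_neg_eq, Real.dist_eq, hI, div_sub_one hK, abs_div]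
    have habs : |μ₁ * c * b ^ (γ - 1)| = |μ₁| * (c * b ^ (γ - 1)) := by
      rw [mul_assoc, abs_mul, abs_of_pos hKpos]
    rw [habs, div_le_iff₀ hDpos]
    calc |(∫ ω in s, m (E ω) ∂ℙ) - μ₁ * c * b ^ (γ - 1)|
        = |(∫ ω in s, m (E ω) ∂ℙ) - μ₁ * (c * b ^ (γ - 1))| := by rw [mul_assoc]
      _ ≤ (ε * |μ₁| / 2) * (c * b ^ (γ - 1)) := hbound
      _ = ε / 2 * (|μ₁| * (c * b ^ (γ - 1))) := by ring
  exact lt_of_le_of_lt key (half_lt_self hε)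
end

section
/- Let F : (0,∞) → [0,∞) be nondecreasing with F(b) > 0 for all b > 0 and regularly varying at 0 with index γ-1 > 0 (i.e., F(tb)/F(t) → b^{γ-1} as t ↓ 0). Fix s > 0 and K > 0. If b_n solves b_n^s·F(b_n) = K/n and b̂_n solves b̂_n^s·F(b̂_n) = K_n/n with K_n/K → 1, then b̂_n/b_n → 1. -/
open Filter Set

/-- Consistency of the data-driven trimming threshold: `F` nondecreasing, positive and
regularly varying at 0 with index `γ-1 > 0`. If `b_n` solves `b^s F(b) = K/n` and
`b̂_n` solves `b^s F(b) = K_n/n` with `K_n → K`, then `b̂_n / b_n → 1`. -/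
theorem stmt7 (F : ℝ → ℝ) (hmono : MonotoneOn F (Set.Ioi 0))
    (hFpos : ∀ b : ℝ, 0 < b → 0 < F b)
    (γ : ℝ) (hγ : 1 < γ)
    (hRV : ∀ b : ℝ, 0 < b →
      Tendsto (fun t : ℝ => F (t * b) / F t) (nhdsWithin 0 (Set.Ioi 0))
        (nhds (b ^ (γ - 1))))
    (s K : ℝ) (hs : 0 < s) (hK : 0 < K)
    (b bh : ℕ → ℝ) (Kn : ℕ → ℝ)
    (hb : ∀ n, 0 < b n) (hbh : ∀ n, 0 < bh n)
    (heq : ∀ n : ℕ, 1 ≤ n → (b n) ^ s * F (b n) = K / n)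
    (heqh : ∀ n : ℕ, 1 ≤ n → (bh n) ^ s * F (bh n) = Kn n / n)
    (hKn : Tendsto Kn atTop (nhds K)) :
    Tendsto (fun n => bh n / b n) atTop (nhds 1) := by
  -- monotonicity of G x = x^s * F x on (0,∞)
  have hGmono : ∀ x y : ℝ, 0 < x → x ≤ y → x ^ s * F x ≤ y ^ s * F y := by
    intro x y hx hxy
    have hy : 0 < y := lt_of_lt_of_le hx hxy
    exact mul_le_mul (Real.rpow_le_rpow hx.le hxy hs.le)
      (hmono hx hy hxy) (hFpos x hx).le (Real.rpow_nonneg hy.le s)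
  -- K / n → 0
  have hinv : Tendsto (fun n : ℕ => (n : ℝ)⁻¹) atTop (nhds 0) :=
    tendsto_inv_atTop_zero.comp tendsto_natCast_atTop_atTop
  have hKdiv : Tendsto (fun n : ℕ => K / n) atTop (nhds 0) := by
    have := hinv.const_mul K
    simpa [div_eq_mul_inv] using this
  -- b n → 0
  have hb0 : Tendsto b atTop (nhds 0) := by
    rw [tendsto_order]
    constructor
    · intro a ha
      filter_upwards with n
      exact ha.trans (hb n)
    · intro a ha
      have hGa : 0 < a ^ s * F a :=
        mul_pos (Real.rpow_pos_of_pos ha s) (hFpos a ha)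
      have h1 : ∀ᶠ n : ℕ in atTop, K / n < a ^ s * F a :=
        hKdiv.eventually_lt_const hGa
      filter_upwards [h1, eventually_ge_atTop 1] with n hn hn1
      by_contra hcon
      push_neg at hcon
      have h2 : a ^ s * F a ≤ (b n) ^ s * F (b n) := hGmono a (b n) ha hcon
      rw [heq n hn1] at h2
      linarith
  have hb0' : Tendsto b atTop (nhdsWithin 0 (Set.Ioi 0)) :=
    tendsto_nhdsWithin_of_tendsto_nhds_of_eventually_within b hb0
      (Eventually.of_forall fun n => hb n)
  -- ratio limit for any c > 0
  have hratio : ∀ c : ℝ, 0 < c →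
      Tendsto (fun n => c ^ s * (F (b n * c) / F (b n))) atTop
        (nhds (c ^ s * c ^ (γ - 1))) := by
    intro c hc
    exact ((hRV c hc).comp hb0').const_mul _
  -- Kn n / K → 1
  have hr1 : Tendsto (fun n => Kn n / K) atTop (nhds 1) := by
    have := hKn.div_const K
    rwa [div_self hK.ne'] at this
  rw [tendsto_order]
  constructor
  · -- lower bound : ∀ a < 1, eventually a < bh n / b n
    intro a ha
    rcases le_or_gt a 0 with ha0 | ha0
    · filter_upwards with n
      exact lt_of_le_of_lt ha0 (div_pos (hbh n) (hb n))
    · -- 0 < a < 1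
      have has : a ^ s < 1 := Real.rpow_lt_one ha0.le ha hs
      have hag : a ^ (γ - 1) < 1 := Real.rpow_lt_one ha0.le ha (by linarith)
      have hLpos : 0 < a ^ s * a ^ (γ - 1) :=
        mul_pos (Real.rpow_pos_of_pos ha0 s) (Real.rpow_pos_of_pos ha0 _)
      have hL1 : a ^ s * a ^ (γ - 1) < 1 := by
        calc a ^ s * a ^ (γ - 1) < 1 * 1 :=
              mul_lt_mul'' has hag (Real.rpow_nonneg ha0.le s)
                (Real.rpow_nonneg ha0.le _)
          _ = 1 := by ring
      set m : ℝ := (1 + a ^ s * a ^ (γ - 1)) / 2 with hm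
      have hmL : a ^ s * a ^ (γ - 1) < m := by rw [hm]; linarith
      have hm1 : m < 1 := by rw [hm]; linarith
      have h1 : ∀ᶠ n : ℕ in atTop, a ^ s * (F (b n * a) / F (b n)) < m :=
        (hratio a ha0).eventually_lt_const hmL
      have h2 : ∀ᶠ n : ℕ in atTop, m < Kn n / K :=
        hr1.eventually_const_lt hm1
      filter_upwards [h1, h2, eventually_ge_atTop 1] with n hn1 hn2 hn3
      rw [lt_div_iff₀ (hb n)]
      by_contra hcon
      push_neg at hcon
      have hab : 0 < b n * a := mul_pos (hb n) ha0
      have hB : (bh n) ^ s * F (bh n) ≤ (b n * a) ^ s * F (b n * a) :=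
        hGmono (bh n) (b n * a) (hbh n) (by linarith [hcon])
      have hFn : 0 < F (b n) := hFpos _ (hb n)
      have hPn : 0 < (b n) ^ s * F (b n) :=
        mul_pos (Real.rpow_pos_of_pos (hb n) s) hFn
      have hGexp : (b n * a) ^ s * F (b n * a)
          = (a ^ s * (F (b n * a) / F (b n))) * ((b n) ^ s * F (b n)) := by
        rw [Real.mul_rpow (hb n).le ha0.le]
        field_simp
      have hA : (b n * a) ^ s * F (b n * a) < m * ((b n) ^ s * F (b n)) := by
        rw [hGexp]
        exact mul_lt_mul_of_pos_right hn1 hPn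
      have hfin : (bh n) ^ s * F (bh n) < m * ((b n) ^ s * F (b n)) :=
        lt_of_le_of_lt hB hA
      rw [heqh n hn3, heq n hn3] at hfin
      have hnpos : (0 : ℝ) < n := by exact_mod_cast hn3
      rw [lt_div_iff₀ hK] at hn2
      have : Kn n < m * K := by
        have h := (div_lt_div_iff₀ hnpos hnpos).mp (by
          simpa [← mul_div_assoc] using hfin)
        nlinarith
      linarith
  · -- upper bound : ∀ a > 1, eventually bh n / b n < a
    intro a ha
    have ha0 : (0 : ℝ) < a := by linarith
    have has : 1 < a ^ s :=
      (Real.one_lt_rpow_iff_of_pos ha0).mpr (Or.inl ⟨ha, hs⟩)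
    have hag : 1 < a ^ (γ - 1) :=
      (Real.one_lt_rpow_iff_of_pos ha0).mpr (Or.inl ⟨ha, by linarith⟩)
    have hL1 : 1 < a ^ s * a ^ (γ - 1) := by
      calc (1 : ℝ) = 1 * 1 := by ring
        _ < a ^ s * a ^ (γ - 1) := mul_lt_mul'' has hag (by norm_num) (by norm_num)
    set m : ℝ := (1 + a ^ s * a ^ (γ - 1)) / 2 with hm
    have hmL : m < a ^ s * a ^ (γ - 1) := by rw [hm]; linarith
    have hm1 : 1 < m := by rw [hm]; linarith
    have h1 : ∀ᶠ n : ℕ in atTop, m < a ^ s * (F (b n * a) / F (b n)) :=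
      (hratio a ha0).eventually_const_lt hmL
    have h2 : ∀ᶠ n : ℕ in atTop, Kn n / K < m :=
      hr1.eventually_lt_const hm1
    filter_upwards [h1, h2, eventually_ge_atTop 1] with n hn1 hn2 hn3
    rw [div_lt_iff₀ (hb n)]
    by_contra hcon
    push_neg at hcon
    have hab : 0 < b n * a := mul_pos (hb n) ha0
    have hB : (b n * a) ^ s * F (b n * a) ≤ (bh n) ^ s * F (bh n) :=
      hGmono (b n * a) (bh n) hab (by linarith [hcon])
    have hFn : 0 < F (b n) := hFpos _ (hb n)
    have hPn : 0 < (b n) ^ s * F (b n) :=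
      mul_pos (Real.rpow_pos_of_pos (hb n) s) hFn
    have hGexp : (b n * a) ^ s * F (b n * a)
        = (a ^ s * (F (b n * a) / F (b n))) * ((b n) ^ s * F (b n)) := by
      rw [Real.mul_rpow (hb n).le ha0.le]
      field_simp
    have hA : m * ((b n) ^ s * F (b n)) < (b n * a) ^ s * F (b n * a) := by
      rw [hGexp]
      exact mul_lt_mul_of_pos_right hn1 hPn
    have hfin : m * ((b n) ^ s * F (b n)) < (bh n) ^ s * F (bh n) :=
      lt_of_lt_of_le hA hB
    rw [heqh n hn3, heq n hn3] at hfin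
    have hnpos : (0 : ℝ) < n := by exact_mod_cast hn3
    rw [div_lt_iff₀ hK] at hn2
    have : m * K < Kn n := by
      have h := (div_lt_div_iff₀ hnpos hnpos).mp (by
        simpa [← mul_div_assoc] using hfin)
      nlinarith
    linarith
end

section
/- Suppose E is a random variable on (0,1] with distribution function G(x) = P[E ≤ x] satisfying G(x)/x^{γ-1} → c > 0 as x ↓ 0, with γ ∈ (1,2), and let D be Bernoulli given E with P[D=1|E] = E. Let W = D/E. Then x·P[W > x]/G(1/x) → (γ-1)/γ as x → ∞; in particular P[W > x] ~ c·((γ-1)/γ)·x^{-γ}. -/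
open MeasureTheory Filter Set


lemma stmt9.auxInt {G : ℝ → ℝ} {c γ : ℝ} (hmono : Monotone G) (hG0 : G 0 = 0) (hc : 0 < c) (hγ : 1 < γ)
    (hG : Tendsto (fun u => G u / u ^ (γ - 1)) (nhdsWithin 0 (Set.Ioi 0)) (nhds c)) :
    Tendsto (fun u => (∫ t in (0:ℝ)..u, G t) / u ^ γ) (nhdsWithin 0 (Set.Ioi 0))
      (nhds (c / γ)) := by
  have hγ0 : (0:ℝ) < γ := by linarith
  rw [Metric.tendsto_nhdsWithin_nhds] at hG ⊢
  intro ε hε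
  obtain ⟨δ, hδ, hδ'⟩ := hG (ε * γ / 2) (by positivity)
  refine ⟨δ, hδ, fun u hu hud => ?_⟩
  have hu0 : 0 < u := hu
  have hud' : u < δ := by
    rw [Real.dist_eq, sub_zero, abs_of_pos hu0] at hud; exact hud
  have hiG : IntervalIntegrable G volume 0 u := hmono.intervalIntegrable
  have hirpow : IntervalIntegrable (fun t : ℝ => t ^ (γ-1)) volume 0 u :=
    intervalIntegral.intervalIntegrable_rpow' (by linarith)
  have hval : (∫ t in (0:ℝ)..u, t ^ (γ - 1)) = u ^ γ / γ := by
    rw [integral_rpow (Or.inl (by linarith))]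
    rw [Real.zero_rpow (by linarith : γ - 1 + 1 ≠ 0)]
    norm_num
  have hupow : 0 < u ^ γ := Real.rpow_pos_of_pos hu0 γ
  have key : |(∫ t in (0:ℝ)..u, G t) - c * (u ^ γ / γ)| ≤ ε * γ / 2 * (u ^ γ / γ) := by
    have h1 : (∫ t in (0:ℝ)..u, G t) - c * (u ^ γ / γ)
        = ∫ t in (0:ℝ)..u, (G t - c * t ^ (γ-1)) := by
      rw [intervalIntegral.integral_sub hiG (hirpow.const_mul c),
        intervalIntegral.integral_const_mul, hval]
    have h2 : ‖∫ t in (0:ℝ)..u, (G t - c * t ^ (γ-1))‖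
        ≤ |∫ t in (0:ℝ)..u, (ε * γ / 2) * t ^ (γ-1)| := by
      apply intervalIntegral.norm_integral_le_abs_of_norm_le _ (hirpow.const_mul _)
      rw [Set.uIoc_of_le hu0.le]
      filter_upwards [ae_restrict_mem measurableSet_Ioc] with t ht
      have ht0 : 0 < t := ht.1
      have htpow : 0 < t ^ (γ - 1) := Real.rpow_pos_of_pos ht0 _
      have hb := hδ' (show t ∈ Set.Ioi (0:ℝ) from ht0)
        (by rw [Real.dist_eq, sub_zero, abs_of_pos ht0]; exact lt_of_le_of_lt ht.2 hud')
      rw [Real.dist_eq] at hb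
      have : G t - c * t ^ (γ-1) = (G t / t ^ (γ-1) - c) * t ^ (γ-1) := by
        field_simp
      rw [Real.norm_eq_abs, this, abs_mul, abs_of_pos htpow]
      exact mul_le_mul_of_nonneg_right hb.le htpow.le
    rw [h1]
    calc |∫ t in (0:ℝ)..u, (G t - c * t ^ (γ-1))|
        ≤ |∫ t in (0:ℝ)..u, (ε * γ / 2) * t ^ (γ-1)| := h2
      _ = ε * γ / 2 * (u ^ γ / γ) := by
          rw [intervalIntegral.integral_const_mul, hval, abs_of_nonneg (by positivity)]
  rw [Real.dist_eq]
  have heq : (∫ t in (0:ℝ)..u, G t) / u ^ γ - c / γ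
      = ((∫ t in (0:ℝ)..u, G t) - c * (u ^ γ / γ)) / u ^ γ := by
    field_simp
  rw [heq, abs_div, abs_of_pos hupow, div_lt_iff₀ hupow]
  calc |(∫ t in (0:ℝ)..u, G t) - c * (u ^ γ / γ)|
      ≤ ε * γ / 2 * (u ^ γ / γ) := key
    _ = ε / 2 * u ^ γ := by field_simp
    _ < ε * u ^ γ := by nlinarith


lemma stmt9.auxRatio {G Glt : ℝ → ℝ} {c γ : ℝ} (hc : 0 < c) (hγ : 1 < γ)
    (hG : Tendsto (fun u => G u / u ^ (γ - 1)) (nhdsWithin 0 (Set.Ioi 0)) (nhds c))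
    (hGpos : ∀ u : ℝ, 0 < u → 0 < G u)
    (hle : ∀ u, Glt u ≤ G u) (hge : ∀ t u : ℝ, t < u → G t ≤ Glt u) :
    Tendsto (fun u => Glt u / G u) (nhdsWithin 0 (Set.Ioi 0)) (nhds 1) := by
  have hGinv : Tendsto (fun u => u ^ (γ - 1) / G u) (nhdsWithin 0 (Set.Ioi 0)) (nhds c⁻¹) := by
    simpa only [inv_div] using hG.inv₀ hc.ne'
  rw [Metric.tendsto_nhds]
  intro ε hε
  set ε' := min ε 1 with hε'def
  have hε'pos : 0 < ε' := lt_min hε one_pos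
  have hε'le : ε' ≤ ε := min_le_left _ _
  have hε'le1 : ε' ≤ 1 := min_le_right _ _
  have hbase0 : 0 < 1 - ε' / 2 := by linarith
  have hbase1 : 1 - ε' / 2 < 1 := by linarith
  set θ := (1 - ε' / 2) ^ (γ - 1)⁻¹ with hθdef
  have hθpos : 0 < θ := Real.rpow_pos_of_pos hbase0 _
  have hθlt : θ < 1 := Real.rpow_lt_one hbase0.le hbase1 (inv_pos.mpr (by linarith))
  have hθpow : θ ^ (γ - 1) = 1 - ε' / 2 := by
    rw [hθdef, ← Real.rpow_mul hbase0.le, inv_mul_cancel₀ (by linarith : γ - 1 ≠ 0),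
      Real.rpow_one]
  have hθmap : Tendsto (fun u : ℝ => θ * u) (nhdsWithin 0 (Set.Ioi 0))
      (nhdsWithin 0 (Set.Ioi 0)) := by
    apply tendsto_nhdsWithin_of_tendsto_nhds_of_eventually_within
    · have h0 : Tendsto (fun u : ℝ => u) (nhdsWithin 0 (Set.Ioi 0)) (nhds 0) :=
        tendsto_id.mono_left nhdsWithin_le_nhds
      simpa using h0.const_mul θ
    · filter_upwards [self_mem_nhdsWithin] with u hu
      exact mul_pos hθpos hu
  have Tθ : Tendsto (fun u => G (θ * u) / G u) (nhdsWithin 0 (Set.Ioi 0))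
      (nhds (θ ^ (γ - 1))) := by
    have h1 : Tendsto (fun u => G (θ * u) / (θ * u) ^ (γ - 1)) (nhdsWithin 0 (Set.Ioi 0))
        (nhds c) := hG.comp hθmap
    have h2 := (h1.mul_const (θ ^ (γ - 1))).mul hGinv
    have hval : c * θ ^ (γ - 1) * c⁻¹ = θ ^ (γ - 1) := by
      field_simp
    rw [hval] at h2
    apply h2.congr'
    filter_upwards [self_mem_nhdsWithin] with u hu
    have hu0 : (0 : ℝ) < u := hu
    have hmul : (θ * u) ^ (γ - 1) = θ ^ (γ - 1) * u ^ (γ - 1) :=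
      Real.mul_rpow hθpos.le hu0.le
    have hGu : G u ≠ 0 := (hGpos u hu0).ne'
    have h3 : (0:ℝ) < θ ^ (γ-1) := Real.rpow_pos_of_pos hθpos _
    have h4 : (0:ℝ) < u ^ (γ-1) := Real.rpow_pos_of_pos hu0 _
    rw [hmul]
    field_simp
  have hev : ∀ᶠ u in nhdsWithin 0 (Set.Ioi 0), 1 - ε' < G (θ * u) / G u :=
    Tθ.eventually (eventually_gt_nhds (by rw [hθpow]; linarith))
  filter_upwards [hev, self_mem_nhdsWithin] with u h1u hu
  have hu0 : (0 : ℝ) < u := hu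
  have hGu := hGpos u hu0
  have hub : Glt u / G u ≤ 1 := div_le_one_of_le₀ (hle u) hGu.le
  have hlb : G (θ * u) / G u ≤ Glt u / G u := by
    gcongr
    exact hge _ _ (by nlinarith)
  rw [Real.dist_eq, abs_lt]
  constructor
  · nlinarith
  · nlinarith


lemma stmt9.keyFormula {Ω : Type*} [MeasurableSpace Ω] (ℙ : Measure Ω) [IsProbabilityMeasure ℙ]
    (E : Ω → ℝ) (hEmeas : Measurable E) (hE : ∀ ω, E ω ∈ Set.Ioc (0 : ℝ) 1)
    {u : ℝ} (hu : 0 < u) :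
    ∫ ω in E ⁻¹' (Set.Iio u), E ω ∂ℙ
      = u * (ℙ {ω | E ω < u}).toReal - ∫ t in (0:ℝ)..u, (ℙ {ω | E ω ≤ t}).toReal := by
  have hGmmono : Monotone (fun t : ℝ => (ℙ {ω | E ω ≤ t}).toReal) := fun a b hab =>
    ENNReal.toReal_mono (measure_ne_top ℙ _) (measure_mono fun ω h => le_trans h hab)
  set s := E ⁻¹' (Set.Iio u) with hsdef
  have hs : MeasurableSet s := hEmeas measurableSet_Iio
  have hint : Integrable E (ℙ.restrict s) := by
    refine Integrable.mono' (integrable_const 1) hEmeas.aestronglyMeasurable ?_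
    filter_upwards with ω
    rw [Real.norm_eq_abs, abs_of_pos (hE ω).1]
    exact (hE ω).2
  have hnn : 0 ≤ᵐ[ℙ.restrict s] E := Eventually.of_forall fun ω => (hE ω).1.le
  rw [show (∫ ω in s, E ω ∂ℙ) = ∫ ω, E ω ∂(ℙ.restrict s) from rfl,
    hint.integral_eq_integral_meas_lt hnn]
  have hmeas_lt : ∀ t : ℝ, MeasurableSet {a | t < E a} := fun t =>
    measurableSet_lt measurable_const hEmeas
  have hrw : ∀ t : ℝ, (ℙ.restrict s) {a | t < E a} = ℙ ({a | t < E a} ∩ s) := fun t =>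
    Measure.restrict_apply (hmeas_lt t)
  have hIci : ∀ t ∈ Set.Ici u, ((ℙ.restrict s) {a | t < E a}).toReal = 0 := by
    intro t ht
    rw [hrw]
    have : {a | t < E a} ∩ s = ∅ := by
      ext a
      simp only [Set.mem_inter_iff, Set.mem_setOf_eq, hsdef, Set.mem_preimage, Set.mem_Iio,
        Set.mem_empty_iff_false, iff_false, not_and]
      intro h1 h2
      exact absurd (lt_trans h1 h2) (not_lt.2 ht)
    rw [this, measure_empty]
    simp
  have hIoo : ∀ t ∈ Set.Ioo (0:ℝ) u, ((ℙ.restrict s) {a | t < E a}).toReal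
      = (ℙ {ω | E ω < u}).toReal - (ℙ {ω | E ω ≤ t}).toReal := by
    intro t ht
    rw [hrw]
    have hsub : {ω | E ω ≤ t} ⊆ s := fun a ha => lt_of_le_of_lt ha ht.2
    have hset : {a | t < E a} ∩ s = s \ {ω | E ω ≤ t} := by
      ext a
      simp only [Set.mem_inter_iff, Set.mem_setOf_eq, hsdef, Set.mem_preimage, Set.mem_Iio,
        Set.mem_diff, not_le]
      tauto
    rw [hset, measure_diff hsub (hEmeas measurableSet_Iic).nullMeasurableSet (measure_ne_top ℙ _),
      ENNReal.toReal_sub_of_le (measure_mono hsub) (measure_ne_top ℙ _)]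
    rfl
  have hsplit : Set.Ioi (0:ℝ) = Set.Ioo 0 u ∪ Set.Ici u := (Set.Ioo_union_Ici_eq_Ioi hu).symm
  have hdisj : Disjoint (Set.Ioo (0:ℝ) u) (Set.Ici u) :=
    Set.disjoint_left.2 fun t ht ht' => absurd ht' (not_le.2 ht.2)
  have hGmint : IntegrableOn (fun t : ℝ => (ℙ {ω | E ω ≤ t}).toReal) (Set.Ioo 0 u) := by
    have h1 : IntervalIntegrable (fun t : ℝ => (ℙ {ω | E ω ≤ t}).toReal) volume 0 u :=
      hGmmono.intervalIntegrable
    exact ((intervalIntegrable_iff_integrableOn_Ioc_of_le hu.le).1 h1).mono_set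
      Set.Ioo_subset_Ioc_self
  have hconstint : IntegrableOn (fun _ : ℝ => (ℙ {ω | E ω < u}).toReal) (Set.Ioo 0 u) := by
    apply integrableOn_const measure_Ioo_lt_top.ne
  have hsubint : IntegrableOn
      (fun t : ℝ => (ℙ {ω | E ω < u}).toReal - (ℙ {ω | E ω ≤ t}).toReal) (Set.Ioo 0 u) :=
    hconstint.sub hGmint
  have hI1 : IntegrableOn (fun t => ((ℙ.restrict s) {a | t < E a}).toReal) (Set.Ioo 0 u) :=
    hsubint.congr_fun (fun t ht => (hIoo t ht).symm) measurableSet_Ioo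
  have hI2 : IntegrableOn (fun t => ((ℙ.restrict s) {a | t < E a}).toReal) (Set.Ici u) :=
    (integrableOn_zero).congr_fun (fun t ht => (hIci t ht).symm) measurableSet_Ici
  simp only [measureReal_def]
  rw [hsplit, setIntegral_union hdisj measurableSet_Ici hI1 hI2,
    setIntegral_congr_fun measurableSet_Ici hIci, integral_zero, add_zero,
    setIntegral_congr_fun measurableSet_Ioo hIoo, ← integral_Ioc_eq_integral_Ioo,
    ← intervalIntegral.integral_of_le hu.le,
    intervalIntegral.integral_sub (intervalIntegrable_const) hGmmono.intervalIntegrable,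
    intervalIntegral.integral_const]
  simp [smul_eq_mul]

/-- Tail of `W = D/E` when `P[E ≤ x]/x^(γ-1) → c` and `P[D = 1 | E] = E`:
`x P[W > x] / G(1/x) → (γ-1)/γ` and `P[W > x] ~ c ((γ-1)/γ) x^(-γ)`. -/
theorem stmt9
    {Ω : Type*} [MeasurableSpace Ω] (ℙ : Measure Ω) [IsProbabilityMeasure ℙ]
    (E D : Ω → ℝ) (hEmeas : Measurable E) (hDmeas : Measurable D)
    (hE : ∀ ω, E ω ∈ Set.Ioc (0 : ℝ) 1) (hD : ∀ ω, D ω = 0 ∨ D ω = 1)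
    (hBern : ∀ s : Set ℝ, MeasurableSet s →
      ℙ ({ω | D ω = 1} ∩ E ⁻¹' s) = ENNReal.ofReal (∫ ω in E ⁻¹' s, E ω ∂ℙ))
    (c γ : ℝ) (hc : 0 < c) (hγ : γ ∈ Set.Ioo (1 : ℝ) 2)
    (hG : Tendsto (fun x : ℝ => (ℙ {ω | E ω ≤ x}).toReal / x ^ (γ - 1))
      (nhdsWithin 0 (Set.Ioi 0)) (nhds c))
    (hGpos : ∀ x : ℝ, 0 < x → 0 < (ℙ {ω | E ω ≤ x}).toReal) :
    Tendsto (fun x : ℝ =>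
        x * (ℙ {ω | D ω / E ω > x}).toReal / (ℙ {ω | E ω ≤ 1 / x}).toReal)
      atTop (nhds ((γ - 1) / γ))
    ∧ Tendsto (fun x : ℝ =>
        (ℙ {ω | D ω / E ω > x}).toReal / (c * ((γ - 1) / γ) * x ^ (-γ)))
      atTop (nhds 1) := by
  have hGmmono : Monotone (fun t : ℝ => (ℙ {ω | E ω ≤ t}).toReal) := fun a b hab =>
    ENNReal.toReal_mono (measure_ne_top ℙ _) (measure_mono fun ω h => le_trans h hab)
  have hGm0 : (ℙ {ω | E ω ≤ (0:ℝ)}).toReal = 0 := by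
    have hempty : {ω | E ω ≤ (0:ℝ)} = ∅ := by
      ext ω
      simp only [Set.mem_setOf_eq, Set.mem_empty_iff_false, iff_false, not_le]
      exact (hE ω).1
    rw [hempty, measure_empty]
    simp
  have keyFormula : ∀ {u : ℝ}, 0 < u → ∫ ω in E ⁻¹' (Set.Iio u), E ω ∂ℙ
      = u * (ℙ {ω | E ω < u}).toReal - ∫ t in (0:ℝ)..u, (ℙ {ω | E ω ≤ t}).toReal :=
    fun {u} hu => stmt9.keyFormula ℙ E hEmeas hE hu
  have auxInt : Tendsto (fun u => (∫ t in (0:ℝ)..u, (ℙ {ω | E ω ≤ t}).toReal) / u ^ γ)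
      (nhdsWithin 0 (Set.Ioi 0)) (nhds (c / γ)) :=
    stmt9.auxInt hGmmono hGm0 hc hγ.1 hG
  have auxRatio : Tendsto (fun u => (ℙ {ω | E ω < u}).toReal / (ℙ {ω | E ω ≤ u}).toReal)
      (nhdsWithin 0 (Set.Ioi 0)) (nhds 1) := by
    refine stmt9.auxRatio hc hγ.1 hG hGpos (fun u => ?_) (fun t u htu => ?_)
    · refine ENNReal.toReal_mono (measure_ne_top ℙ _) (measure_mono fun ω h => ?_)
      exact le_of_lt (show E ω < u from h)
    · exact ENNReal.toReal_mono (measure_ne_top ℙ _)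
        (measure_mono fun ω h => lt_of_le_of_lt h htu)
  obtain ⟨hγ1, hγ2⟩ := hγ
  have hγ0 : (0:ℝ) < γ := by linarith
  have hγne : γ ≠ 0 := hγ0.ne'
  have hγ1ne : γ - 1 ≠ 0 := by linarith
  have hGinv : Tendsto (fun u : ℝ => u ^ (γ - 1) / (ℙ {ω | E ω ≤ u}).toReal)
      (nhdsWithin 0 (Set.Ioi 0)) (nhds c⁻¹) := by
    simpa only [inv_div] using hG.inv₀ hc.ne'
  have hφ : Tendsto (fun u : ℝ =>
      (ℙ {ω | E ω < u}).toReal / (ℙ {ω | E ω ≤ u}).toReal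
        - ((∫ t in (0:ℝ)..u, (ℙ {ω | E ω ≤ t}).toReal) / u ^ γ)
          * (u ^ (γ - 1) / (ℙ {ω | E ω ≤ u}).toReal))
      (nhdsWithin 0 (Set.Ioi 0)) (nhds ((γ - 1) / γ)) := by
    have h := auxRatio.sub (auxInt.mul hGinv)
    have hval : (1 : ℝ) - c / γ * c⁻¹ = (γ - 1) / γ := by
      field_simp
    rwa [hval] at h
  have hcomp : Tendsto (fun x : ℝ => 1 / x) atTop (nhdsWithin 0 (Set.Ioi 0)) := by
    apply tendsto_nhdsWithin_of_tendsto_nhds_of_eventually_within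
    · simpa only [one_div] using tendsto_inv_atTop_zero
    · filter_upwards [eventually_gt_atTop 0] with x hx
      exact one_div_pos.2 hx
  -- the event identity and measure computation
  have hPW : ∀ x : ℝ, 0 < x → (ℙ {ω | D ω / E ω > x}).toReal
      = (1/x) * (ℙ {ω | E ω < 1/x}).toReal
        - ∫ t in (0:ℝ)..(1/x), (ℙ {ω | E ω ≤ t}).toReal := by
    intro x hx
    have hu : 0 < 1 / x := one_div_pos.2 hx
    have hset : {ω | D ω / E ω > x} = {ω | D ω = 1} ∩ E ⁻¹' (Set.Iio (1/x)) := by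
      ext ω
      have hEω := (hE ω).1
      simp only [Set.mem_setOf_eq, gt_iff_lt, Set.mem_inter_iff, Set.mem_preimage, Set.mem_Iio]
      constructor
      · intro h
        rcases hD ω with h0 | h1
        · rw [h0, zero_div] at h; linarith
        · refine ⟨h1, ?_⟩
          rw [h1] at h
          rw [lt_div_iff₀ hEω] at h
          rw [lt_div_iff₀ hx]
          nlinarith
      · rintro ⟨h1, h2⟩
        rw [h1, lt_div_iff₀ hEω]
        rw [lt_div_iff₀ hx] at h2
        nlinarith
    have hnn : 0 ≤ ∫ ω in E ⁻¹' (Set.Iio (1/x)), E ω ∂ℙ :=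
      setIntegral_nonneg (hEmeas measurableSet_Iio) fun ω _ => (hE ω).1.le
    rw [hset, hBern _ measurableSet_Iio, ENNReal.toReal_ofReal hnn, keyFormula hu]
  constructor
  · apply (hφ.comp hcomp).congr'
    filter_upwards [eventually_gt_atTop 0] with x hx
    have hu : 0 < 1 / x := one_div_pos.2 hx
    have hGmu : (ℙ {ω | E ω ≤ 1/x}).toReal ≠ 0 := (hGpos _ hu).ne'
    have hupow : (0:ℝ) < (1/x) ^ γ := Real.rpow_pos_of_pos hu γ
    have hupow1 : (0:ℝ) < (1/x) ^ (γ - 1) := Real.rpow_pos_of_pos hu _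
    have hsplitpow : (1/x) ^ γ = (1/x) * (1/x) ^ (γ - 1) := by
      rw [show (1/x) * (1/x) ^ (γ-1) = (1/x) ^ (1:ℝ) * (1/x) ^ (γ-1) by rw [Real.rpow_one],
        ← Real.rpow_add hu]
      norm_num
    simp only [Function.comp_apply]
    rw [hPW x hx]
    field_simp
    rw [hsplitpow]
    ring_nf
    rw [mul_inv_cancel₀ hx.ne']
    rw [show {ω | E ω * x < 1} = {ω | x * E ω < 1} from
      Set.ext fun ω => by rw [Set.mem_setOf_eq, Set.mem_setOf_eq, mul_comm]]
    ring
  · have hB : Tendsto (fun x : ℝ => (ℙ {ω | E ω ≤ 1/x}).toReal / (1/x) ^ (γ-1))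
        atTop (nhds c) := hG.comp hcomp
    have hT1 : Tendsto (fun x : ℝ =>
        x * (ℙ {ω | D ω / E ω > x}).toReal / (ℙ {ω | E ω ≤ 1 / x}).toReal)
        atTop (nhds ((γ - 1) / γ)) := by
      apply (hφ.comp hcomp).congr'
      filter_upwards [eventually_gt_atTop 0] with x hx
      have hu : 0 < 1 / x := one_div_pos.2 hx
      have hGmu : (ℙ {ω | E ω ≤ 1/x}).toReal ≠ 0 := (hGpos _ hu).ne'
      have hupow : (0:ℝ) < (1/x) ^ γ := Real.rpow_pos_of_pos hu γ
      have hupow1 : (0:ℝ) < (1/x) ^ (γ - 1) := Real.rpow_pos_of_pos hu _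
      have hsplitpow : (1/x) ^ γ = (1/x) * (1/x) ^ (γ - 1) := by
        rw [show (1/x) * (1/x) ^ (γ-1) = (1/x) ^ (1:ℝ) * (1/x) ^ (γ-1) by rw [Real.rpow_one],
          ← Real.rpow_add hu]
        norm_num
      simp only [Function.comp_apply]
      rw [hPW x hx]
      field_simp
      rw [hsplitpow]
      ring_nf
      rw [mul_inv_cancel₀ hx.ne']
      rw [show {ω | E ω * x < 1} = {ω | x * E ω < 1} from
        Set.ext fun ω => by rw [Set.mem_setOf_eq, Set.mem_setOf_eq, mul_comm]]
      ring
    have hk : (γ - 1) / γ ≠ 0 := div_ne_zero hγ1ne hγne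
    have hone : (γ - 1) / γ * c * (c * ((γ - 1) / γ))⁻¹ = 1 := by
      rw [mul_comm ((γ-1)/γ) c]
      exact mul_inv_cancel₀ (mul_ne_zero hc.ne' hk)
    have hprod := (hT1.mul hB).mul_const ((c * ((γ - 1) / γ))⁻¹)
    rw [hone] at hprod
    apply hprod.congr'
    filter_upwards [eventually_gt_atTop 0] with x hx
    have hu : 0 < 1 / x := one_div_pos.2 hx
    have hGmu : (ℙ {ω | E ω ≤ 1/x}).toReal ≠ 0 := (hGpos _ hu).ne'
    have hxpow : (0:ℝ) < x ^ γ := Real.rpow_pos_of_pos hx γ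
    have hxpow1 : (0:ℝ) < x ^ (γ - 1) := Real.rpow_pos_of_pos hx _
    have e1 : (1/x) ^ (γ-1) = (x ^ (γ-1))⁻¹ := by
      rw [one_div, Real.inv_rpow hx.le]
    have e2 : x ^ (-γ) = (x ^ γ)⁻¹ := Real.rpow_neg hx.le γ
    have e3 : x * x ^ (γ-1) = x ^ γ := by
      rw [show x * x ^ (γ-1) = x ^ (1:ℝ) * x ^ (γ-1) by rw [Real.rpow_one],
        ← Real.rpow_add hx]
      norm_num
    rw [e1, e2, ← e3]
    field_simp
    have hset' : {ω | x * E ω ≤ 1} = {ω | E ω ≤ 1 / x} := Set.ext fun ω => by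
      rw [Set.mem_setOf_eq, Set.mem_setOf_eq, le_div_iff₀ hx, mul_comm]
    rw [hset']
    exact mul_div_cancel_right₀ _ hGmu
end
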